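/- The poset B = ℕ × ℕ × L described in the context is a dcpo; moreover, every directed subset D of B that has no maximum element is of the form D = {(m₀, n₀, (x_k)_{a₀,b₀}) : k ∈ N} for fixed m₀, n₀, a₀, b₀ ∈ ℕ, where (x_k)_{k∈N} is either a cofinal subset of ℕ or a directed subset of ℕ^{<ℕ} without maximum elements, and sup D = (m₀, n₀, ⊤). -/
import Mathlib


/-- A subset `D` is directed with respect to the relation `le`:
it is nonempty and any two elements have an upper bound in `D`. -/
def DirectedOn' {α : Type*} (le : α → α → Prop) (D : Set α) : Prop :=
  D.Nonempty ∧ ∀ x ∈ D, ∀ y ∈ D, ∃ z ∈ D, le x z ∧ le y z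

/-- `u` is a least upper bound of `D` with respect to the relation `le`. -/
def IsLub' {α : Type*} (le : α → α → Prop) (D : Set α) (u : α) : Prop :=
  (∀ x ∈ D, le x u) ∧ ∀ v, (∀ x ∈ D, le x v) → le u v

/-- Every directed subset has a least upper bound: `le` makes the carrier a dcpo. -/
def IsDcpoRel {α : Type*} (le : α → α → Prop) : Prop :=
  ∀ D : Set α, DirectedOn' le D → ∃ u, IsLub' le D u

/-- `U` is Scott open with respect to `le`: it is an upper set and every directed subset
whose least upper bound lies in `U` meets `U`. -/
def ScottOpen' {α : Type*} (le : α → α → Prop) (U : Set α) : Prop :=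
  (∀ x y, le x y → x ∈ U → y ∈ U) ∧
    ∀ D u, DirectedOn' le D → IsLub' le D u → u ∈ U → (D ∩ U).Nonempty

/-- `A` is Scott closed with respect to `le`: it is a lower set and contains the least upper
bounds of its directed subsets. -/
def ScottClosed' {α : Type*} (le : α → α → Prop) (A : Set α) : Prop :=
  (∀ x y, le x y → y ∈ A → x ∈ A) ∧
    ∀ D u, D ⊆ A → DirectedOn' le D → IsLub' le D u → u ∈ A

/-- Sobriety of the Scott space of `le`: the space is T₀ and every irreducible Scott closed
subset is the Scott closure `↓x = {y | le y x}` of a unique point `x`. -/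
def SoberRel {α : Type*} (le : α → α → Prop) : Prop :=
  (∀ x y : α, (∀ U : Set α, ScottOpen' le U → (x ∈ U ↔ y ∈ U)) → x = y) ∧
    ∀ C : Set α, ScottClosed' le C → C.Nonempty →
      (∀ A B : Set α, ScottClosed' le A → ScottClosed' le B → C ⊆ A ∪ B → C ⊆ A ∨ C ⊆ B) →
      ∃! x : α, C = {y | le y x}

/-! ### The posets `M`, `L`, `B`, `P₁`, `P₂` of Miao, Xi, Jia, Li, Zhao -/

/-- `ℕ^{<ℕ}`: nonempty finite words over `ℕ`. -/
abbrev NWord : Type := {l : List ℕ // l ≠ []}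

/-- The prefix order on nonempty finite words. -/
def wordLE (v w : NWord) : Prop := v.1 <+: w.1

/-- The word of length 1 corresponding to a natural number. -/
def word1 (k : ℕ) : NWord := ⟨[k], by simp⟩

/-- `s.k`: the word `s` extended by the letter `k`. -/
def wordSnoc (s : NWord) (k : ℕ) : NWord := ⟨s.1 ++ [k], by simp⟩

/-- The poset `M = ℕ ⊔ ℕ^{<ℕ}`, the disjoint sum of `ℕ` and the words. -/
abbrev Mt : Type := ℕ ⊕ NWord

/-- The (disjoint sum) order on `M`. -/
def Mle : Mt → Mt → Prop
  | Sum.inl a, Sum.inl b => a ≤ b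
  | Sum.inr v, Sum.inr w => wordLE v w
  | _, _ => False

/-- The strict order on `M`. -/
def Mlt (x y : Mt) : Prop := Mle x y ∧ x ≠ y

/-- Pairs `(a, b)` of naturals with `a < b`. -/
abbrev Pairt : Type := {p : ℕ × ℕ // p.1 < p.2}

/-- The poset `L = ({(a,b) : a < b} × M) ∪ {⊤}`; `none` is the top element `⊤` and
`some (p, x)` is the element `x_{a,b}` for `p = (a,b)`. -/
abbrev Lt : Type := Option (Pairt × Mt)

/-- The strict order on `L`: everything (other than `⊤`) is strictly below `⊤ = none`, and
`x_{a,b} < y_{a,b}` iff `x < y` in `M` (with the same tag `(a,b)`). -/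
def Llt (u v : Lt) : Prop :=
  (u ≠ none ∧ v = none) ∨ ∃ p x y, u = some (p, x) ∧ v = some (p, y) ∧ Mlt x y

/-- The carrier of the poset `B = ℕ × ℕ × L`. -/
abbrev Bt : Type := ℕ × ℕ × Lt

/-- `⊏₁`: `(m, n, ℓ) ⊏₁ (m, n, ℓ')` whenever `ℓ < ℓ'` in `L`. -/
def sq1 : Bt → Bt → Prop := fun x y =>
  ∃ m n u v, x = (m, n, u) ∧ y = (m, n, v) ∧ Llt u v

/-- `⊏₂`: `(a, n, x_{a,b}) ⊏₂ (f_{a,b}(x), n+1, ⊤)` for a word `x ∈ ℕ^{<ℕ}`. -/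
def sq2 (f : Pairt → NWord → ℕ) : Bt → Bt → Prop := fun x y =>
  ∃ (n : ℕ) (p : Pairt) (w : NWord),
    x = (p.1.1, n, some (p, Sum.inr w)) ∧ y = (f p w, n + 1, (none : Lt))

/-- `⊏₃`: `(b, n, x_{a,b}) ⊏₃ (f_{a,b}(x), n+1, ⊤)` for `x ∈ ℕ`, regarded as a word of
length 1. -/
def sq3 (f : Pairt → NWord → ℕ) : Bt → Bt → Prop := fun x y =>
  ∃ (n k : ℕ) (p : Pairt),
    x = (p.1.2, n, some (p, Sum.inl k)) ∧ y = (f p (word1 k), n + 1, (none : Lt))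

/-- `⊏₄`: `(f_{a,b}(s), n, x_{a,b}) ⊏₄ (f_{a,b}(s.x), n, ⊤)` for a word `s` and `x ∈ ℕ`. -/
def sq4 (f : Pairt → NWord → ℕ) : Bt → Bt → Prop := fun x y =>
  ∃ (n k : ℕ) (p : Pairt) (s : NWord),
    x = (f p s, n, some (p, Sum.inl k)) ∧ y = (f p (wordSnoc s k), n, (none : Lt))

/-- `⊏ = ⊏₁ ∪ ⊏₂ ∪ ⊏₃ ∪ ⊏₄ ∪ ⊏₁;⊏₂ ∪ ⊏₁;⊏₃ ∪ ⊏₁;⊏₄`. -/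
def Bsq (f : Pairt → NWord → ℕ) : Bt → Bt → Prop := fun x y =>
  sq1 x y ∨ sq2 f x y ∨ sq3 f x y ∨ sq4 f x y ∨
    (∃ z, sq1 x z ∧ sq2 f z y) ∨ (∃ z, sq1 x z ∧ sq3 f z y) ∨ (∃ z, sq1 x z ∧ sq4 f z y)

/-- The order `⊑` on `B`: the reflexive closure of `⊏`. -/
def Ble (f : Pairt → NWord → ℕ) (x y : Bt) : Prop := x = y ∨ Bsq f x y

/-- The hypotheses on the data `i`, `f`: `i` is an injection into `P(ℕ)` with pairwise
disjoint values satisfying `n < k` for all `k ∈ i (m, n)`, and each `f_{a,b}` is a monotone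
injection of `ℕ^{<ℕ}` (with the prefix order) into `i (a, b)`. -/
structure IFData (i : Pairt → Set ℕ) (f : Pairt → NWord → ℕ) : Prop where
  inj : Function.Injective i
  disj : ∀ p q : Pairt, p ≠ q → i p ∩ i q = ∅
  gt : ∀ p : Pairt, ∀ k ∈ i p, p.1.2 < k
  mem : ∀ p w, f p w ∈ i p
  finj : ∀ p, Function.Injective (f p)
  fmono : ∀ p v w, wordLE v w → f p v ≤ f p w
/-! ### Auxiliary lemmas -/

lemma wordLE_refl (v : NWord) : wordLE v v := List.prefix_refl _

lemma wordLE_trans {u v w : NWord} (h1 : wordLE u v) (h2 : wordLE v w) : wordLE u w :=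
  List.IsPrefix.trans h1 h2

lemma wordLE_antisymm {u v : NWord} (h1 : wordLE u v) (h2 : wordLE v u) : u = v :=
  Subtype.ext (h1.eq_of_length_le h2.length_le)

lemma Mle_refl (x : Mt) : Mle x x := by
  cases x with
  | inl a => exact Nat.le_refl a
  | inr w => exact wordLE_refl w

lemma Mle_trans {x y z : Mt} (h1 : Mle x y) (h2 : Mle y z) : Mle x z := by
  cases x <;> cases y <;> cases z <;> simp only [Mle] at * <;>
    first
      | exact Nat.le_trans h1 h2
      | exact wordLE_trans h1 h2
      | exact h1.elim
      | exact h2.elim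

lemma Mle_antisymm {x y : Mt} (h1 : Mle x y) (h2 : Mle y x) : x = y := by
  cases x <;> cases y <;> simp only [Mle] at * <;>
    first
      | exact congrArg Sum.inl (Nat.le_antisymm h1 h2)
      | exact congrArg Sum.inr (wordLE_antisymm h1 h2)
      | exact h1.elim

lemma Mlt_trans {x y z : Mt} (h1 : Mlt x y) (h2 : Mlt y z) : Mlt x z := by
  refine ⟨Mle_trans h1.1 h2.1, fun h => h1.2 ?_⟩
  subst h
  exact Mle_antisymm h1.1 h2.1

lemma Mlt_asymm {x y : Mt} (h1 : Mlt x y) (h2 : Mlt y x) : False :=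
  h1.2 (Mle_antisymm h1.1 h2.1)

lemma Llt_ne_none {u v : Lt} (h : Llt u v) : u ≠ none := by
  rcases h with ⟨h, _⟩ | ⟨p, x, y, rfl, _, _⟩
  · exact h
  · simp

lemma Llt_trans {u v w : Lt} (h1 : Llt u v) (h2 : Llt v w) : Llt u w := by
  rcases h1 with ⟨hu, rfl⟩ | ⟨p, x, y, rfl, rfl, hxy⟩
  · exact absurd rfl (Llt_ne_none h2)
  · rcases h2 with ⟨_, rfl⟩ | ⟨q, x', y', he, rfl, h'⟩
    · exact Or.inl ⟨by simp, rfl⟩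
    · rw [Option.some.injEq, Prod.mk.injEq] at he
      obtain ⟨rfl, rfl⟩ := he
      exact Or.inr ⟨p, x, y', rfl, rfl, Mlt_trans hxy h'⟩

lemma Llt_asymm {u v : Lt} (h1 : Llt u v) (h2 : Llt v u) : False := by
  rcases h1 with ⟨_, rfl⟩ | ⟨p, x, y, rfl, rfl, hxy⟩
  · exact Llt_ne_none h2 rfl
  · rcases h2 with ⟨_, he⟩ | ⟨q, a, b, ha, hb, hab⟩
    · exact Option.some_ne_none _ he
    · rw [Option.some.injEq, Prod.mk.injEq] at ha hb
      obtain ⟨rfl, rfl⟩ := ha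
      obtain ⟨-, rfl⟩ := hb
      exact Mlt_asymm hxy hab

section BsqLemmas

variable (f : Pairt → NWord → ℕ)

lemma sq1_src {x y : Bt} (h : sq1 x y) : x.2.2 ≠ none := by
  obtain ⟨m, n, u, v, rfl, rfl, hl⟩ := h
  simpa using Llt_ne_none hl

lemma Bsq_src {x y : Bt} (h : Bsq f x y) : x.2.2 ≠ none := by
  rcases h with h | h | h | h | ⟨z, h, -⟩ | ⟨z, h, -⟩ | ⟨z, h, -⟩
  · exact sq1_src h
  · obtain ⟨n, p, w, rfl, rfl⟩ := h; simp
  · obtain ⟨n, k, p, rfl, rfl⟩ := h; simp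
  · obtain ⟨n, k, p, s, rfl, rfl⟩ := h; simp
  all_goals exact sq1_src h

lemma Bsq_tgt {x y : Bt} (h : Bsq f x y) : sq1 x y ∨ y.2.2 = none := by
  rcases h with h | h | h | h | ⟨z, -, h⟩ | ⟨z, -, h⟩ | ⟨z, -, h⟩
  · exact Or.inl h
  · obtain ⟨n, p, w, rfl, rfl⟩ := h; exact Or.inr rfl
  · obtain ⟨n, k, p, rfl, rfl⟩ := h; exact Or.inr rfl
  · obtain ⟨n, k, p, s, rfl, rfl⟩ := h; exact Or.inr rfl
  · obtain ⟨n, p, w, rfl, rfl⟩ := h; exact Or.inr rfl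
  · obtain ⟨n, k, p, rfl, rfl⟩ := h; exact Or.inr rfl
  · obtain ⟨n, k, p, s, rfl, rfl⟩ := h; exact Or.inr rfl

lemma sq1_trans {x y z : Bt} (h1 : sq1 x y) (h2 : sq1 y z) : sq1 x z := by
  obtain ⟨m, n, u, v, rfl, rfl, hl1⟩ := h1
  obtain ⟨m', n', u', v', he, rfl, hl2⟩ := h2
  rw [Prod.mk.injEq, Prod.mk.injEq] at he
  obtain ⟨rfl, rfl, rfl⟩ := he
  exact ⟨m, n, u, v', rfl, rfl, Llt_trans hl1 hl2⟩

lemma Bsq_trans {x y z : Bt} (h1 : Bsq f x y) (h2 : Bsq f y z) : Bsq f x z := by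
  have hy := Bsq_src f h2
  rcases Bsq_tgt f h1 with hs | hn
  · rcases h2 with h | h | h | h | ⟨w, ha, hb⟩ | ⟨w, ha, hb⟩ | ⟨w, ha, hb⟩
    · exact Or.inl (sq1_trans hs h)
    · exact Or.inr (Or.inr (Or.inr (Or.inr (Or.inl ⟨y, hs, h⟩))))
    · exact Or.inr (Or.inr (Or.inr (Or.inr (Or.inr (Or.inl ⟨y, hs, h⟩)))))
    · exact Or.inr (Or.inr (Or.inr (Or.inr (Or.inr (Or.inr ⟨y, hs, h⟩))))) 
    · exact Or.inr (Or.inr (Or.inr (Or.inr (Or.inl ⟨w, sq1_trans hs ha, hb⟩))))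
    · exact Or.inr (Or.inr (Or.inr (Or.inr (Or.inr (Or.inl ⟨w, sq1_trans hs ha, hb⟩)))))
    · exact Or.inr (Or.inr (Or.inr (Or.inr (Or.inr (Or.inr ⟨w, sq1_trans hs ha, hb⟩)))))
  · exact absurd hn hy

lemma Ble_refl (x : Bt) : Ble f x x := Or.inl rfl

lemma Ble_trans {x y z : Bt} (h1 : Ble f x y) (h2 : Ble f y z) : Ble f x z := by
  rcases h1 with rfl | h1
  · exact h2
  · rcases h2 with rfl | h2
    · exact Or.inr h1
    · exact Or.inr (Bsq_trans f h1 h2)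

lemma Ble_antisymm {x y : Bt} (h1 : Ble f x y) (h2 : Ble f y x) : x = y := by
  rcases h1 with rfl | h1
  · rfl
  · rcases h2 with rfl | h2
    · rfl
    · exfalso
      have hy := Bsq_src f h2
      have hx := Bsq_src f h1
      rcases Bsq_tgt f h1 with hs1 | hn
      · rcases Bsq_tgt f h2 with hs2 | hn
        · obtain ⟨m, n, u, v, rfl, rfl, hl1⟩ := hs1
          obtain ⟨m', n', u', v', he, he2, hl2⟩ := hs2
          rw [Prod.mk.injEq, Prod.mk.injEq] at he he2
          obtain ⟨rfl, rfl, rfl⟩ := he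
          obtain ⟨-, -, rfl⟩ := he2
          exact Llt_asymm hl1 hl2
        · exact hx hn
      · exact hy hn

end BsqLemmas
section ShapeLemmas

variable (f : Pairt → NWord → ℕ)

lemma sq1_cases {m n : ℕ} {p : Pairt} {w : Mt} {y : Bt}
    (h : sq1 (m, n, some (p, w)) y) :
    (∃ w', y = (m, n, some (p, w')) ∧ Mlt w w') ∨ y = (m, n, (none : Lt)) := by
  obtain ⟨m', n', u, v, he, rfl, hl⟩ := h
  rw [Prod.mk.injEq, Prod.mk.injEq] at he
  obtain ⟨rfl, rfl, hu⟩ := he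
  rcases hl with ⟨-, rfl⟩ | ⟨q, a, b, ha, rfl, hab⟩
  · exact Or.inr rfl
  · rw [← hu, Option.some.injEq, Prod.mk.injEq] at ha
    obtain ⟨rfl, rfl⟩ := ha
    exact Or.inl ⟨b, rfl, hab⟩

lemma sq2_cases {m n : ℕ} {p : Pairt} {w : Mt} {y : Bt}
    (h : sq2 f (m, n, some (p, w)) y) :
    ∃ s : NWord, w = Sum.inr s ∧ m = p.1.1 ∧ y = (f p s, n + 1, (none : Lt)) := by
  obtain ⟨n', p', w', he, rfl⟩ := h
  rw [Prod.mk.injEq, Prod.mk.injEq, Option.some.injEq, Prod.mk.injEq] at he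
  obtain ⟨h1, rfl, rfl, rfl⟩ := he
  exact ⟨w', rfl, h1, rfl⟩

lemma sq3_cases {m n : ℕ} {p : Pairt} {w : Mt} {y : Bt}
    (h : sq3 f (m, n, some (p, w)) y) :
    ∃ k : ℕ, w = Sum.inl k ∧ m = p.1.2 ∧ y = (f p (word1 k), n + 1, (none : Lt)) := by
  obtain ⟨n', k, p', he, rfl⟩ := h
  rw [Prod.mk.injEq, Prod.mk.injEq, Option.some.injEq, Prod.mk.injEq] at he
  obtain ⟨h1, rfl, rfl, rfl⟩ := he
  exact ⟨k, rfl, h1, rfl⟩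

lemma sq4_cases {m n : ℕ} {p : Pairt} {w : Mt} {y : Bt}
    (h : sq4 f (m, n, some (p, w)) y) :
    ∃ (k : ℕ) (s : NWord), w = Sum.inl k ∧ m = f p s ∧
      y = (f p (wordSnoc s k), n, (none : Lt)) := by
  obtain ⟨n', k, p', s, he, rfl⟩ := h
  rw [Prod.mk.injEq, Prod.mk.injEq, Option.some.injEq, Prod.mk.injEq] at he
  obtain ⟨h1, rfl, rfl, rfl⟩ := he
  exact ⟨k, s, rfl, h1, rfl⟩

/-- The master case analysis for `⊏` out of a non-top element. -/
lemma bsq_cases {m n : ℕ} {p : Pairt} {w : Mt} {y : Bt}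
    (h : Bsq f (m, n, some (p, w)) y) :
    (∃ w', y = (m, n, some (p, w')) ∧ Mlt w w') ∨
    y = (m, n, (none : Lt)) ∨
    (∃ s : NWord, Mle w (Sum.inr s) ∧ m = p.1.1 ∧ y = (f p s, n + 1, (none : Lt))) ∨
    (∃ k : ℕ, Mle w (Sum.inl k) ∧ m = p.1.2 ∧ y = (f p (word1 k), n + 1, (none : Lt))) ∨
    (∃ (k : ℕ) (s : NWord), Mle w (Sum.inl k) ∧ m = f p s ∧
      y = (f p (wordSnoc s k), n, (none : Lt))) := by
  rcases h with h | h | h | h | ⟨z, h1, h2⟩ | ⟨z, h1, h2⟩ | ⟨z, h1, h2⟩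
  · rcases sq1_cases h with h | h
    · exact Or.inl h
    · exact Or.inr (Or.inl h)
  · obtain ⟨s, rfl, h1, rfl⟩ := sq2_cases f h
    exact Or.inr (Or.inr (Or.inl ⟨s, Mle_refl _, h1, rfl⟩))
  · obtain ⟨k, rfl, h1, rfl⟩ := sq3_cases f h
    exact Or.inr (Or.inr (Or.inr (Or.inl ⟨k, Mle_refl _, h1, rfl⟩)))
  · obtain ⟨k, s, rfl, h1, rfl⟩ := sq4_cases f h
    exact Or.inr (Or.inr (Or.inr (Or.inr ⟨k, s, Mle_refl _, h1, rfl⟩)))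
  · rcases sq1_cases h1 with ⟨w', rfl, hw⟩ | rfl
    · obtain ⟨s, rfl, hm, rfl⟩ := sq2_cases f h2
      exact Or.inr (Or.inr (Or.inl ⟨s, hw.1, hm, rfl⟩))
    · obtain ⟨n', p', w', he, -⟩ := h2
      simp [Prod.ext_iff] at he
  · rcases sq1_cases h1 with ⟨w', rfl, hw⟩ | rfl
    · obtain ⟨k, rfl, hm, rfl⟩ := sq3_cases f h2
      exact Or.inr (Or.inr (Or.inr (Or.inl ⟨k, hw.1, hm, rfl⟩)))
    · obtain ⟨n', k, p', he, -⟩ := h2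
      simp [Prod.ext_iff] at he
  · rcases sq1_cases h1 with ⟨w', rfl, hw⟩ | rfl
    · obtain ⟨k, s, rfl, hm, rfl⟩ := sq4_cases f h2
      exact Or.inr (Or.inr (Or.inr (Or.inr ⟨k, s, hw.1, hm, rfl⟩)))
    · obtain ⟨n', k, p', s, he, -⟩ := h2
      simp [Prod.ext_iff] at he

/-- Anything is `⊑` the top with the same `(m, n)`. -/
lemma bsq_top {m n : ℕ} {p : Pairt} {w : Mt} :
    Bsq f (m, n, some (p, w)) (m, n, (none : Lt)) :=
  Or.inl ⟨m, n, some (p, w), none, rfl, rfl, Or.inl ⟨by simp, rfl⟩⟩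

lemma bsq_of_Mlt {m n : ℕ} {p : Pairt} {w w' : Mt} (h : Mlt w w') :
    Bsq f (m, n, some (p, w)) (m, n, some (p, w')) :=
  Or.inl ⟨m, n, some (p, w), some (p, w'), rfl, rfl, Or.inr ⟨p, w, w', rfl, rfl, h⟩⟩

lemma ble_some_tgt {x : Bt} {m n : ℕ} {p : Pairt} {w' : Mt}
    (h : Ble f x (m, n, some (p, w'))) :
    x = (m, n, some (p, w')) ∨ ∃ w, x = (m, n, some (p, w)) ∧ Mlt w w' := by
  rcases h with rfl | h
  · exact Or.inl rfl
  · right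
    rcases Bsq_tgt f h with hs | hn
    · obtain ⟨m', n', u, v, rfl, he, hl⟩ := hs
      rw [Prod.mk.injEq, Prod.mk.injEq] at he
      obtain ⟨rfl, rfl, rfl⟩ := he
      rcases hl with ⟨-, he⟩ | ⟨q, a, b, rfl, hb, hab⟩
      · exact absurd he (by simp)
      · rw [Option.some.injEq, Prod.mk.injEq] at hb
        obtain ⟨rfl, rfl⟩ := hb
        exact ⟨a, rfl, hab⟩
    · simp at hn

end ShapeLemmas
lemma word_unbounded {T : Set NWord}
    (hdir : DirectedOn' wordLE T)
    (hnm : ¬ ∃ w ∈ T, ∀ v ∈ T, wordLE v w) :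
    ∀ n : ℕ, ∃ t ∈ T, n ≤ t.1.length := by
  push_neg at hnm
  intro n
  induction n with
  | zero =>
    obtain ⟨t, ht⟩ := hdir.1
    exact ⟨t, ht, Nat.zero_le _⟩
  | succ n ih =>
    obtain ⟨t, ht, hn⟩ := ih
    obtain ⟨v, hv, hvt⟩ := hnm t ht
    obtain ⟨z, hz, htz, hvz⟩ := hdir.2 t ht v hv
    refine ⟨z, hz, ?_⟩
    have hlt : t.1.length < z.1.length := by
      rcases Nat.lt_or_ge t.1.length z.1.length with h | h
      · exact h
      · exfalso
        apply hvt
        have hzt : t = z := Subtype.ext (htz.eq_of_length_le h)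
        exact hzt ▸ hvz
    omega

lemma word1_inj {a b : ℕ} (h : word1 a = word1 b) : a = b := by
  have := congrArg (fun w : NWord => w.1) h
  simpa [word1] using this

lemma wordSnoc_inj_right {s : NWord} {a b : ℕ} (h : wordSnoc s a = wordSnoc s b) : a = b := by
  have h2 := congrArg (fun w : NWord => w.1) h
  simp only [wordSnoc] at h2
  simpa using List.append_inj_right h2 rfl

lemma mle_of_ble (f : Pairt → NWord → ℕ) {m n : ℕ} {p : Pairt} {w w' : Mt}
    (h : Ble f (m, n, some (p, w)) (m, n, some (p, w'))) : Mle w w' := by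
  rcases ble_some_tgt f h with he | ⟨w'', he, hlt⟩
  · rw [Prod.mk.injEq, Prod.mk.injEq, Option.some.injEq, Prod.mk.injEq] at he
    rw [he.2.2.2]
    exact Mle_refl _
  · rw [Prod.mk.injEq, Prod.mk.injEq, Option.some.injEq, Prod.mk.injEq] at he
    rw [he.2.2.2]
    exact hlt.1

/-- The classification of directed sets in `B` without a maximum element. -/
lemma classify (i : Pairt → Set ℕ) (f : Pairt → NWord → ℕ) (hif : IFData i f)
    (D : Set Bt) (hD : DirectedOn' (Ble f) D)
    (hnomax : ¬ ∃ m ∈ D, ∀ x ∈ D, Ble f x m) :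
    ∃ (m₀ n₀ : ℕ) (p : Pairt) (S : Set Mt),
      D = {b : Bt | ∃ x ∈ S, b = (m₀, n₀, some (p, x))} ∧
      ((∃ T : Set ℕ, S = Sum.inl '' T ∧ ∀ n : ℕ, ∃ k ∈ T, n ≤ k) ∨
       (∃ T : Set NWord, S = Sum.inr '' T ∧ DirectedOn' wordLE T ∧
          ¬ ∃ w ∈ T, ∀ v ∈ T, wordLE v w)) ∧
      IsLub' (Ble f) D (m₀, n₀, (none : Lt)) := by
  push_neg at hnomax
  obtain ⟨⟨x₀, hx₀⟩, hdir⟩ := hD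
  -- Step 1: every element of D has a `some` third component
  have hsome : ∀ x ∈ D, x.2.2 ≠ none := by
    rintro ⟨m, n, u⟩ hx hu
    simp only at hu; subst hu
    obtain ⟨y, hy, hyx⟩ := hnomax (m, n, (none : Lt)) hx
    apply hyx
    obtain ⟨z, hz, hxz, hyz⟩ := hdir _ hx y hy
    rcases hxz with rfl | hxz
    · exact hyz
    · exact absurd rfl (Bsq_src f hxz)
  obtain ⟨m₀, n₀, u₀⟩ := x₀
  obtain ⟨p₀, w₀, rfl⟩ : ∃ p w, u₀ = some (p, w) := by
    rcases hu : u₀ with _ | ⟨p, w⟩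
    · exact absurd (by simpa using hu) (hsome _ hx₀)
    · exact ⟨p, w, rfl⟩
  -- Step 2: every element of D has the form (m₀, n₀, some (p₀, w))
  have hform : ∀ x ∈ D, ∃ w, x = (m₀, n₀, some (p₀, w)) := by
    intro x hx
    obtain ⟨z, hz, hxz, h0z⟩ := hdir x hx _ hx₀
    obtain ⟨mz, nz, uz⟩ := z
    obtain ⟨q, wz, rfl⟩ : ∃ q w, uz = some (q, w) := by
      rcases hu : uz with _ | ⟨q, w⟩
      · exact absurd (by simpa using hu) (hsome _ hz)
      · exact ⟨q, w, rfl⟩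
    have hz0 : mz = m₀ ∧ nz = n₀ ∧ q = p₀ := by
      rcases h0z with heq | hb
      · rw [Prod.mk.injEq, Prod.mk.injEq, Option.some.injEq, Prod.mk.injEq] at heq
        exact ⟨heq.1.symm, heq.2.1.symm, heq.2.2.1.symm⟩
      · rcases bsq_cases f hb with ⟨w', he, -⟩ | he | ⟨s, -, -, he⟩ | ⟨k, -, -, he⟩ |
          ⟨k, s, -, -, he⟩ <;>
          rw [Prod.mk.injEq, Prod.mk.injEq] at he
        · rw [Option.some.injEq, Prod.mk.injEq] at he
          exact ⟨he.1, he.2.1, he.2.2.1⟩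
        all_goals exact absurd he.2.2 (by simp)
    obtain ⟨rfl, rfl, rfl⟩ := hz0
    rcases ble_some_tgt f hxz with he | ⟨w, he, -⟩
    · exact ⟨wz, he⟩
    · exact ⟨w, he⟩
  -- The set S
  set S : Set Mt := {w | (m₀, n₀, some (p₀, w)) ∈ D} with hSdef
  have hw₀S : w₀ ∈ S := hx₀
  have hDeq : D = {b : Bt | ∃ x ∈ S, b = (m₀, n₀, some (p₀, x))} := by
    ext b; constructor
    · intro hb
      obtain ⟨w, rfl⟩ := hform b hb
      exact ⟨w, hb, rfl⟩
    · rintro ⟨w, hw, rfl⟩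
      exact hw
  have hSdir : ∀ w1 ∈ S, ∀ w2 ∈ S, ∃ w3 ∈ S, Mle w1 w3 ∧ Mle w2 w3 := by
    intro w1 h1 w2 h2
    obtain ⟨z, hz, h1z, h2z⟩ := hdir _ h1 _ h2
    obtain ⟨wz, rfl⟩ := hform z hz
    exact ⟨wz, hz, mle_of_ble f h1z, mle_of_ble f h2z⟩
  have hSnomax : ∀ w ∈ S, ∃ v ∈ S, ¬ Mle v w := by
    intro w hw
    obtain ⟨y, hy, hcon⟩ := hnomax _ hw
    obtain ⟨v, rfl⟩ := hform y hy
    refine ⟨v, hy, fun hle => hcon ?_⟩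
    by_cases hvw : v = w
    · subst hvw; exact Ble_refl f _
    · exact Or.inr (bsq_of_Mlt f ⟨hle, hvw⟩)
  -- upper bound
  have hub : ∀ x ∈ D, Ble f x (m₀, n₀, (none : Lt)) := by
    intro x hx
    obtain ⟨w, rfl⟩ := hform x hx
    exact Or.inr (bsq_top f)
  -- jump lemma for upper bounds of the form (mv, nv, none)
  have hjump : ∀ mv nv : ℕ, (∀ x ∈ D, Ble f x (mv, nv, (none : Lt))) →
      ¬ (mv = m₀ ∧ nv = n₀) → ∀ w ∈ S,
      (∃ s : NWord, Mle w (Sum.inr s) ∧ mv = f p₀ s ∧ nv = n₀ + 1) ∨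
      (∃ k : ℕ, Mle w (Sum.inl k) ∧ mv = f p₀ (word1 k) ∧ nv = n₀ + 1) ∨
      (∃ (k : ℕ) (s : NWord), Mle w (Sum.inl k) ∧ m₀ = f p₀ s ∧
        mv = f p₀ (wordSnoc s k) ∧ nv = n₀) := by
    intro mv nv hv hne w hw
    rcases hv _ hw with heq | hb
    · exact absurd heq (by simp)
    · rcases bsq_cases f hb with ⟨w', he, -⟩ | he | ⟨s, h1, h2, he⟩ | ⟨k, h1, h2, he⟩ |
        ⟨k, s, h1, h2, he⟩ <;> rw [Prod.mk.injEq, Prod.mk.injEq] at he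
      · exact absurd he.2.2 (by simp)
      · exact absurd ⟨he.1, he.2.1⟩ hne
      · exact Or.inl ⟨s, h1, he.1, he.2.1⟩
      · exact Or.inr (Or.inl ⟨k, h1, he.1, he.2.1⟩)
      · exact Or.inr (Or.inr ⟨k, s, h1, h2, he.1, he.2.1⟩)
  -- case split on the summand of w₀
  rcases w₀ with k₀ | s₀
  · -- natural-number case
    have hall : ∀ w ∈ S, ∃ k, w = Sum.inl k := by
      intro w hw
      obtain ⟨w3, h3, hw3, h03⟩ := hSdir w hw _ hw₀S
      rcases w3 with k3 | s3
      · rcases w with k | s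
        · exact ⟨k, rfl⟩
        · exact absurd hw3 (by simp [Mle])
      · exact absurd h03 (by simp [Mle])
    set T : Set ℕ := {k | Sum.inl k ∈ S} with hTdef
    have hk₀T : k₀ ∈ T := hw₀S
    have hST : S = Sum.inl '' T := by
      ext w; constructor
      · intro hw
        obtain ⟨k, rfl⟩ := hall w hw
        exact ⟨k, hw, rfl⟩
      · rintro ⟨k, hk, rfl⟩
        exact hk
    have hTnm : ∀ k ∈ T, ∃ k' ∈ T, k < k' := by
      intro k hk
      obtain ⟨v, hv, hnle⟩ := hSnomax _ hk
      obtain ⟨k', rfl⟩ := hall v hv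
      refine ⟨k', hv, ?_⟩
      by_contra hle
      exact hnle (show (k' : ℕ) ≤ k from Nat.le_of_not_lt hle)
    have hTcof : ∀ n : ℕ, ∃ k ∈ T, n ≤ k := by
      intro n
      induction n with
      | zero => exact ⟨k₀, hk₀T, Nat.zero_le _⟩
      | succ n ih =>
        obtain ⟨k, hk, hn⟩ := ih
        obtain ⟨k', hk', hlt⟩ := hTnm k hk
        exact ⟨k', hk', by omega⟩
    refine ⟨m₀, n₀, p₀, S, hDeq, Or.inl ⟨T, hST, hTcof⟩, hub, ?_⟩
    -- least upper bound
    rintro ⟨mv, nv, lv⟩ hv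
    rcases lv with _ | ⟨q, wv⟩
    swap
    · -- some case is impossible: wv would be an upper bound of S
      exfalso
      have hwub : ∀ w ∈ S, Mle w wv := by
        intro w hw
        rcases ble_some_tgt f (hv _ hw) with he | ⟨u, he, hlt⟩
        · rw [Prod.mk.injEq, Prod.mk.injEq, Option.some.injEq, Prod.mk.injEq] at he
          rw [he.2.2.2]
          exact Mle_refl _
        · rw [Prod.mk.injEq, Prod.mk.injEq, Option.some.injEq, Prod.mk.injEq] at he
          rw [he.2.2.2]
          exact hlt.1
      rcases wv with K | s
      · obtain ⟨k, hk, hKk⟩ := hTcof (K + 1)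
        have : (k : ℕ) ≤ K := hwub _ hk
        omega
      · exact absurd (hwub _ hk₀T) (by simp [Mle])
    · -- none case
      by_cases hne : mv = m₀ ∧ nv = n₀
      · obtain ⟨rfl, rfl⟩ := hne
        exact Ble_refl f _
      · exfalso
        have hj := hjump mv nv hv hne
        rcases hj _ hk₀T with ⟨s, hs, -⟩ | ⟨K, h1, hmv, hnv⟩ | ⟨K, s, h1, hm₀, hmv, hnv⟩
        · exact absurd hs (by simp [Mle])
        · -- all k ≤ K
          have hbd : ∀ k ∈ T, k ≤ K := by
            intro k hk
            rcases hj _ hk with ⟨s, hs, -⟩ | ⟨K', h1', hmv', hnv'⟩ | ⟨K', s', -, -, -, hnv'⟩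
            · exact absurd hs (by simp [Mle])
            · have : word1 K' = word1 K := hif.finj p₀ (hmv'.symm.trans hmv)
              have := word1_inj this
              subst this
              exact h1'
            · omega
          obtain ⟨k, hk, hKk⟩ := hTcof (K + 1)
          have := hbd k hk
          omega
        · have hbd : ∀ k ∈ T, k ≤ K := by
            intro k hk
            rcases hj _ hk with ⟨s', hs, -⟩ | ⟨K', -, -, hnv'⟩ | ⟨K', s', h1', hm₀', hmv', -⟩
            · exact absurd hs (by simp [Mle])
            · omega
            · have hss : s' = s := hif.finj p₀ (hm₀'.symm.trans hm₀)
              subst hss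
              have : wordSnoc s' K' = wordSnoc s' K := hif.finj p₀ (hmv'.symm.trans hmv)
              have := wordSnoc_inj_right this
              subst this
              exact h1'
          obtain ⟨k, hk, hKk⟩ := hTcof (K + 1)
          have := hbd k hk
          omega
  · -- word case
    have hall : ∀ w ∈ S, ∃ t, w = Sum.inr t := by
      intro w hw
      obtain ⟨w3, h3, hw3, h03⟩ := hSdir w hw _ hw₀S
      rcases w3 with k3 | s3
      · exact absurd h03 (by simp [Mle])
      · rcases w with k | s
        · exact absurd hw3 (by simp [Mle])
        · exact ⟨s, rfl⟩
    set T : Set NWord := {t | Sum.inr t ∈ S} with hTdef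
    have hs₀T : s₀ ∈ T := hw₀S
    have hST : S = Sum.inr '' T := by
      ext w; constructor
      · intro hw
        obtain ⟨t, rfl⟩ := hall w hw
        exact ⟨t, hw, rfl⟩
      · rintro ⟨t, ht, rfl⟩
        exact ht
    have hTdir : DirectedOn' wordLE T := by
      refine ⟨⟨s₀, hs₀T⟩, fun t1 h1 t2 h2 => ?_⟩
      obtain ⟨w3, h3, h13, h23⟩ := hSdir _ h1 _ h2
      obtain ⟨t3, rfl⟩ := hall _ h3
      exact ⟨t3, h3, h13, h23⟩
    have hTnm : ¬ ∃ w ∈ T, ∀ v ∈ T, wordLE v w := by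
      rintro ⟨w, hw, hmax⟩
      obtain ⟨v, hv, hnle⟩ := hSnomax _ hw
      obtain ⟨t, rfl⟩ := hall _ hv
      exact hnle (hmax t hv)
    refine ⟨m₀, n₀, p₀, S, hDeq, Or.inr ⟨T, hST, hTdir, hTnm⟩, hub, ?_⟩
    rintro ⟨mv, nv, lv⟩ hv
    rcases lv with _ | ⟨q, wv⟩
    swap
    · exfalso
      have hwub : ∀ w ∈ S, Mle w wv := by
        intro w hw
        rcases ble_some_tgt f (hv _ hw) with he | ⟨u, he, hlt⟩
        · rw [Prod.mk.injEq, Prod.mk.injEq, Option.some.injEq, Prod.mk.injEq] at he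
          rw [he.2.2.2]
          exact Mle_refl _
        · rw [Prod.mk.injEq, Prod.mk.injEq, Option.some.injEq, Prod.mk.injEq] at he
          rw [he.2.2.2]
          exact hlt.1
      rcases wv with K | sv
      · exact absurd (hwub _ hs₀T) (by simp [Mle])
      · obtain ⟨t, ht, hlen⟩ := word_unbounded hTdir hTnm (sv.1.length + 1)
        have hle : wordLE t sv := hwub _ ht
        have := hle.length_le
        omega
    · by_cases hne : mv = m₀ ∧ nv = n₀
      · obtain ⟨rfl, rfl⟩ := hne
        exact Ble_refl f _
      · exfalso
        have hj := hjump mv nv hv hne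
        obtain ⟨s₁, hs₁, hmv₁, -⟩ : ∃ s : NWord, Mle (Sum.inr s₀) (Sum.inr s) ∧
            mv = f p₀ s ∧ nv = n₀ + 1 := by
          rcases hj _ hs₀T with h | ⟨k, hk, -⟩ | ⟨k, s, hk, -⟩
          · exact h
          · exact absurd hk (by simp [Mle])
          · exact absurd hk (by simp [Mle])
        have hubT : ∀ t ∈ T, wordLE t s₁ := by
          intro t ht
          rcases hj _ ht with ⟨s, hts, hmv', -⟩ | ⟨k, hk, -⟩ | ⟨k, s, hk, -⟩
          · have : s = s₁ := hif.finj p₀ (hmv'.symm.trans hmv₁)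
            subst this
            exact hts
          · exact absurd hk (by simp [Mle])
          · exact absurd hk (by simp [Mle])
        obtain ⟨t, ht, hlen⟩ := word_unbounded hTdir hTnm (s₁.1.length + 1)
        have := (hubT t ht).length_le
        omega

/-- The poset `B = ℕ × ℕ × L` (with the order `⊑`) is a dcpo; moreover, every
directed subset `D` of `B` without a maximum element is of the form
`D = {(m₀, n₀, (x)_{a₀,b₀}) : x ∈ S}` for fixed `m₀, n₀` and a fixed pair `(a₀, b₀)` with
`a₀ < b₀`, where `S` is either a cofinal subset of `ℕ` or a directed subset of `ℕ^{<ℕ}`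
without maximum elements, and `sup D = (m₀, n₀, ⊤)`. -/
theorem B_isDcpo_and_directed_form (i : Pairt → Set ℕ) (f : Pairt → NWord → ℕ)
    (hif : IFData i f) :
    IsPartialOrder Bt (Ble f) ∧
    IsDcpoRel (Ble f) ∧
    ∀ D : Set Bt, DirectedOn' (Ble f) D → (¬ ∃ m ∈ D, ∀ x ∈ D, Ble f x m) →
      ∃ (m₀ n₀ : ℕ) (p : Pairt) (S : Set Mt),
        D = {b : Bt | ∃ x ∈ S, b = (m₀, n₀, some (p, x))} ∧
        ((∃ T : Set ℕ, S = Sum.inl '' T ∧ ∀ n : ℕ, ∃ k ∈ T, n ≤ k) ∨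
         (∃ T : Set NWord, S = Sum.inr '' T ∧ DirectedOn' wordLE T ∧
            ¬ ∃ w ∈ T, ∀ v ∈ T, wordLE v w)) ∧
        IsLub' (Ble f) D (m₀, n₀, (none : Lt)) := by
  refine ⟨?_, ?_, fun D hD hnm => classify i f hif D hD hnm⟩
  · exact { refl := Ble_refl f,
            trans := fun a b c h1 h2 => Ble_trans f h1 h2,
            antisymm := fun a b h1 h2 => Ble_antisymm f h1 h2 }
  · intro D hD
    by_cases hmax : ∃ m ∈ D, ∀ x ∈ D, Ble f x m
    · obtain ⟨m, hm, hall⟩ := hmax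
      exact ⟨m, hall, fun v hv => hv m hm⟩
    · obtain ⟨m₀, n₀, p, S, -, -, hlub⟩ := classify i f hif D hD hmax
      exact ⟨_, hlub⟩
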